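/- Let k ≤ n and let r be the maximal radius such that |B(r)| ≤ 2^{n−k}, where B(r) is the Hamming ball of radius r in 𝔽₂^n. Then for any δ > 0 with ⌊r − δn⌋ ≥ 0, there exists a (2^{k−1}, ⌈|B(⌊r − δn⌋)|/2⌉, δ, n)-subset code. -/
import Mathlib


def IsSubsetCode (K T : ℕ) (δ : ℝ) (n : ℕ) (S : Fin K → Set (Fin n → ZMod 2)) : Prop :=
  (∀ p, T ≤ (S p).ncard) ∧
  ∀ p q, p ≠ q → ∀ x ∈ S p, ∀ y ∈ S q, δ * n < (hammingDist x y : ℝ)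

/-- `|B(t)|`: the size of the Hamming ball of radius `t` in `𝔽₂^n`. -/
def ballCount (n t : ℕ) : ℕ := ∑ s ∈ Finset.range (t + 1), n.choose s

open Finset

namespace GreedyCode

abbrev V (n : ℕ) := Fin n → ZMod 2

lemma zmod2_eq_of_ne_iff {a b d : ZMod 2} (h : (a ≠ d) ↔ (b ≠ d)) : a = b := by
  revert h; revert a b d; decide

lemma zmod2_add_one_ne (a : ZMod 2) : a + 1 ≠ a := by revert a; decide

lemma hd_eq {n : ℕ} (x c : V n) :
    hammingDist x c = (univ.filter fun j => x j ≠ c j).card := rfl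

lemma card_sphere {n : ℕ} (c : V n) (i : ℕ) :
    (univ.filter fun x : V n => hammingDist x c = i).card = n.choose i := by
  classical
  have hpc : (Finset.powersetCard i (univ : Finset (Fin n))).card = n.choose i := by
    simp [Finset.card_powersetCard]
  rw [← hpc]
  apply Finset.card_bij (fun (x : V n) _ => univ.filter fun j => x j ≠ c j)
  · intro x hx
    simp only [mem_filter, mem_univ, true_and] at hx
    rw [Finset.mem_powersetCard]
    exact ⟨Finset.subset_univ _, by rw [← hd_eq]; exact hx⟩
  · intro x hx y hy hxy
    funext j
    have : j ∈ (univ.filter fun j => x j ≠ c j) ↔ j ∈ (univ.filter fun j => y j ≠ c j) := by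
      rw [hxy]
    simp only [mem_filter, mem_univ, true_and] at this
    exact zmod2_eq_of_ne_iff this
  · intro F hF
    rw [Finset.mem_powersetCard] at hF
    refine ⟨fun j => if j ∈ F then c j + 1 else c j, ?_, ?_⟩
    · have hfe : (univ.filter fun j => (if j ∈ F then c j + 1 else c j) ≠ c j) = F := by
        ext j
        simp only [mem_filter, mem_univ, true_and]
        by_cases hj : j ∈ F <;> simp [hj, zmod2_add_one_ne]
      simp only [mem_filter, mem_univ, true_and]
      rw [hd_eq, hfe, hF.2]
    · ext j
      simp only [mem_filter, mem_univ, true_and]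
      by_cases hj : j ∈ F <;> simp [hj, zmod2_add_one_ne]

lemma card_ball {n : ℕ} (c : V n) (t : ℕ) :
    (univ.filter fun x : V n => hammingDist x c ≤ t).card = ballCount n t := by
  classical
  have hsplit : (univ.filter fun x : V n => hammingDist x c ≤ t) =
      (Finset.range (t + 1)).biUnion fun i => univ.filter fun x : V n => hammingDist x c = i := by
    ext x
    simp [Nat.lt_succ_iff]
  rw [hsplit, Finset.card_biUnion, ballCount]
  · exact Finset.sum_congr rfl fun i _ => card_sphere c i
  · intro i _ j _ hij
    simp only [Finset.disjoint_left, mem_filter, mem_univ, true_and]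
    rintro x h1 h2
    exact hij (h1.symm.trans h2)

lemma sum_card {n t : ℕ} (P : Finset (V n)) :
    ∑ s : V n, (P.filter fun x => hammingDist x s ≤ t).card = P.card * ballCount n t := by
  classical
  simp only [Finset.card_filter]
  rw [Finset.sum_comm]
  have : ∀ x ∈ P, (∑ s : V n, if hammingDist x s ≤ t then 1 else 0) = ballCount n t := by
    intro x _
    rw [← Finset.card_filter]
    have : (univ.filter fun s : V n => hammingDist x s ≤ t) =
        (univ.filter fun s : V n => hammingDist s x ≤ t) := by
      ext s; simp [hammingDist_comm]
    rw [this, card_ball]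
  rw [Finset.sum_congr rfl this, Finset.sum_const, smul_eq_mul]

lemma averaging {n t : ℕ} (hn : 1 ≤ n) (P : Finset (V n)) (hP : 2 ^ (n - 1) ≤ P.card) :
    ∃ s : V n, (ballCount n t + 1) / 2 ≤ (P.filter fun x => hammingDist x s ≤ t).card := by
  classical
  by_contra hcon
  push_neg at hcon
  set B := ballCount n t with hB
  have hB1 : 1 ≤ (B + 1) / 2 := by
    have := hcon (fun _ => 0)
    omega
  have hcard : ∀ s : V n, (P.filter fun x => hammingDist x s ≤ t).card ≤ (B + 1) / 2 - 1 := by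
    intro s; have := hcon s; omega
  have hsum : P.card * B ≤ (2 : ℕ) ^ n * ((B + 1) / 2 - 1) := by
    rw [← sum_card P]
    calc ∑ s : V n, (P.filter fun x => hammingDist x s ≤ t).card
        ≤ ∑ _s : V n, ((B + 1) / 2 - 1) := Finset.sum_le_sum fun s _ => hcard s
      _ = (2 : ℕ) ^ n * ((B + 1) / 2 - 1) := by
          rw [Finset.sum_const, smul_eq_mul, Finset.card_univ]
          congr 1
          simp [Fintype.card_fun]
  have h2n : (2 : ℕ) ^ n = 2 ^ (n - 1) * 2 := by
    rw [← pow_succ]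
    congr 1
    omega
  have hBound : (2 : ℕ) ^ n * ((B + 1) / 2 - 1) < 2 ^ (n - 1) * B := by
    rw [h2n, mul_assoc]
    have hpos : 0 < 2 ^ (n - 1) := by positivity
    exact (mul_lt_mul_iff_right₀ hpos).mpr (by omega)
  have hge : 2 ^ (n - 1) * B ≤ P.card * B := Nat.mul_le_mul_right _ hP
  omega

noncomputable def pickCenter (n t : ℕ) (P : Finset (V n)) : V n :=
  if h : ∃ s : V n, (ballCount n t + 1) / 2 ≤ (P.filter fun x => hammingDist x s ≤ t).card
  then h.choose else fun _ => 0

lemma pickCenter_spec {n t : ℕ} (P : Finset (V n))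
    (h : ∃ s : V n, (ballCount n t + 1) / 2 ≤ (P.filter fun x => hammingDist x s ≤ t).card) :
    (ballCount n t + 1) / 2 ≤ (P.filter fun x => hammingDist x (pickCenter n t P) ≤ t).card := by
  rw [pickCenter, dif_pos h]
  exact h.choose_spec

noncomputable def greedyP (n t r : ℕ) : ℕ → Finset (V n)
  | 0 => univ
  | i + 1 => (greedyP n t r i).filter
      fun x => r < hammingDist x (pickCenter n t (greedyP n t r i))

lemma greedyP_succ_subset (n t r i : ℕ) : greedyP n t r (i + 1) ⊆ greedyP n t r i :=
  Finset.filter_subset _ _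

lemma greedyP_anti (n t r : ℕ) {i j : ℕ} (h : i ≤ j) : greedyP n t r j ⊆ greedyP n t r i := by
  induction j with
  | zero => simp_all
  | succ j ih =>
    rcases Nat.lt_or_ge i (j + 1) with h' | h'
    · exact (greedyP_succ_subset n t r j).trans (ih (by omega))
    · have : i = j + 1 := by omega
      subst this; exact Finset.Subset.refl _

lemma greedyP_card (n t r : ℕ) (i : ℕ) :
    2 ^ n ≤ (greedyP n t r i).card + i * ballCount n r := by
  induction i with
  | zero =>
    simp [greedyP, Finset.card_univ, Fintype.card_fun]
  | succ i ih =>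
    set P := greedyP n t r i
    set c := pickCenter n t P
    have hsub : P ⊆ (P.filter fun x => r < hammingDist x c) ∪
        (univ.filter fun x : V n => hammingDist x c ≤ r) := by
      intro x hx
      rcases le_or_gt (hammingDist x c) r with h | h
      · exact Finset.mem_union_right _ (by simp [h])
      · exact Finset.mem_union_left _ (by simp [hx, h])
    have hPcard : P.card ≤ (P.filter fun x => r < hammingDist x c).card + ballCount n r := by
      calc P.card ≤ _ := Finset.card_le_card hsub
        _ ≤ _ := Finset.card_union_le _ _
        _ = _ := by rw [card_ball]
    have hrw : (greedyP n t r (i + 1)).card = (P.filter fun x => r < hammingDist x c).card := rfl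
    rw [hrw, Nat.succ_mul]
    omega

end GreedyCode

/-- If `r` is the maximal radius with `|B(r)| ≤ 2^(n−k)`, then for any `δ > 0` with
`r − δn ≥ 0` there exists a `(2^(k−1), ⌈|B(⌊r − δn⌋)| / 2⌉, δ, n)`-subset code.
(In ℕ, `⌈m/2⌉ = (m+1)/2`.) -/
theorem exists_greedy_subset_code
    (n k r : ℕ) (δ : ℝ) (hk1 : 1 ≤ k) (hk : k ≤ n) (hδ : 0 < δ) (hδr : δ * n ≤ r)
    (hr : ballCount n r ≤ 2 ^ (n - k))
    (hrmax : ∀ r', ballCount n r' ≤ 2 ^ (n - k) → r' ≤ r) :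
    ∃ S : Fin (2 ^ (k - 1)) → Set (Fin n → ZMod 2),
      IsSubsetCode (2 ^ (k - 1)) ((ballCount n ⌊(r : ℝ) - δ * n⌋₊ + 1) / 2) δ n S := by
  classical
  open GreedyCode in
  set t := ⌊(r : ℝ) - δ * n⌋₊ with ht
  have hn : 1 ≤ n := hk1.trans hk
  have ht_le : (t : ℝ) ≤ (r : ℝ) - δ * n := Nat.floor_le (by linarith)
  -- cardinality of greedy sets stays large
  have hcard : ∀ i ≤ 2 ^ (k - 1), 2 ^ (n - 1) ≤ (GreedyCode.greedyP n t r i).card := by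
    intro i hi
    have h1 := GreedyCode.greedyP_card n t r i
    have h2 : i * ballCount n r ≤ 2 ^ (k - 1) * 2 ^ (n - k) :=
      Nat.mul_le_mul hi hr
    have h3 : (2 : ℕ) ^ (k - 1) * 2 ^ (n - k) = 2 ^ (n - 1) := by
      rw [← pow_add]
      congr 1
      omega
    rw [h3] at h2
    have h4 : (2 : ℕ) ^ n = 2 ^ (n - 1) + 2 ^ (n - 1) := by
      have : (2 : ℕ) ^ n = 2 ^ (n - 1) * 2 := by
        rw [← pow_succ]; congr 1; omega
      omega
    omega
  have hgood : ∀ i, i < 2 ^ (k - 1) →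
      ∃ s : GreedyCode.V n, (ballCount n t + 1) / 2 ≤
        ((GreedyCode.greedyP n t r i).filter fun x => hammingDist x s ≤ t).card :=
    fun i hi => GreedyCode.averaging hn _ (hcard i hi.le)
  refine ⟨fun p => ↑((GreedyCode.greedyP n t r p).filter
      fun x => hammingDist x (GreedyCode.pickCenter n t (GreedyCode.greedyP n t r p)) ≤ t), ?_, ?_⟩
  · intro p
    rw [Set.ncard_coe_finset]
    exact GreedyCode.pickCenter_spec _ (hgood p p.isLt)
  · intro p q hpq x hx y hy
    simp only [Finset.coe_filter, Set.mem_setOf_eq, Finset.mem_coe] at hx hy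
    -- key claim for ordered pair
    have key : ∀ (a b : Fin (2 ^ (k - 1))) (u v : GreedyCode.V n), (a : ℕ) < b →
        u ∈ GreedyCode.greedyP n t r a →
        hammingDist u (GreedyCode.pickCenter n t (GreedyCode.greedyP n t r a)) ≤ t →
        v ∈ GreedyCode.greedyP n t r b →
        δ * n < (hammingDist u v : ℝ) := by
      intro a b u v hab hu hut hv
      set c := GreedyCode.pickCenter n t (GreedyCode.greedyP n t r a)
      have hv' : v ∈ GreedyCode.greedyP n t r (a + 1) :=
        GreedyCode.greedyP_anti n t r (by omega) hv
      have hvc : r < hammingDist v c := by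
        have := hv'
        simp only [GreedyCode.greedyP, Finset.mem_filter] at this
        exact this.2
      have htri : hammingDist v c ≤ hammingDist v u + hammingDist u c :=
        hammingDist_triangle v u c
      have h1 : (r : ℝ) < (hammingDist v u : ℝ) + (t : ℝ) := by
        have : (hammingDist v c : ℝ) ≤ (hammingDist v u : ℝ) + (hammingDist u c : ℝ) := by
          exact_mod_cast htri
        have h2 : (r : ℝ) < (hammingDist v c : ℝ) := by exact_mod_cast hvc
        have h3 : (hammingDist u c : ℝ) ≤ (t : ℝ) := by exact_mod_cast hut
        linarith
      have hcomm : hammingDist v u = hammingDist u v := hammingDist_comm v u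
      rw [hcomm] at h1
      linarith
    rcases hpq.lt_or_gt with h | h
    · exact key p q x y h hx.1 hx.2 hy.1
    · have := key q p y x h hy.1 hy.2 hx.1
      rwa [hammingDist_comm y x] at this
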